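/- arXiv:2103.12566 — 2 statements merged into one kernel-verified Lean document; each statement's English description precedes it below -/
import Mathlib

section
/- If the circle S¹ is the union of two open, path-connected, proper subsets U and V, then the intersection U ∩ V is not path connected (it has at least two path components). -/
open Set Real

lemma expInjOn : Set.InjOn Circle.exp (Set.Ico 0 (2*π)) := by
  intro x hx y hy h
  obtain ⟨m, hm⟩ := Circle.exp_eq_exp.mp h
  have hπ := Real.two_pi_pos
  have h1 : (m:ℝ) < 1 := by nlinarith [hx.1, hx.2, hy.1, hy.2]
  have h2 : (-1:ℝ) < m := by nlinarith [hx.1, hx.2, hy.1, hy.2]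
  have hm0 : m = 0 := by
    have : -1 < m ∧ m < 1 := ⟨by exact_mod_cast h2, by exact_mod_cast h1⟩
    omega
  simp [hm0] at hm; linarith

lemma expSurj (z : Circle) : ∃ t ∈ Set.Ico 0 (2*π), Circle.exp t = z := by
  rcases le_or_gt 0 (Complex.arg z) with h | h
  · exact ⟨Complex.arg z, ⟨h, by linarith [Complex.arg_le_pi (z:ℂ), Real.pi_pos]⟩, Circle.exp_arg z⟩
  · refine ⟨Complex.arg z + 2*π, ⟨by linarith [Complex.neg_pi_lt_arg (z:ℂ), Real.pi_pos], by linarith⟩, ?_⟩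
    rw [Circle.exp_add_two_pi, Circle.exp_arg]

lemma arcSplit (c : Circle) (hc : c ≠ 1) :
    ∃ C₁ C₂ : Set Circle, IsOpen C₁ ∧ IsOpen C₂ ∧ IsPreconnected C₁ ∧ IsPreconnected C₂ ∧
      Disjoint C₁ C₂ ∧ C₁ ∪ C₂ = ({1, c} : Set Circle)ᶜ ∧
      (1 : Circle) ∈ closure C₁ ∧ c ∈ closure C₁ ∧ (1:Circle) ∈ closure C₂ ∧ c ∈ closure C₂ := by
  have hπ := Real.two_pi_pos
  obtain ⟨θ, hθmem, hθ⟩ := expSurj c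
  have hθ0 : θ ≠ 0 := by
    rintro rfl; exact hc (by simpa using hθ.symm)
  have hθpos : 0 < θ := lt_of_le_of_ne hθmem.1 (Ne.symm hθ0)
  have hθlt : θ < 2*π := hθmem.2
  refine ⟨Circle.exp '' Ioo 0 θ, Circle.exp '' Ioo θ (2*π), ?_, ?_, ?_, ?_, ?_, ?_, ?_, ?_, ?_, ?_⟩
  · -- open: complement is exp '' Icc θ (2π), compact
    have hcompl : (Circle.exp '' Ioo 0 θ)ᶜ = Circle.exp '' Icc θ (2*π) := by
      ext z
      simp only [mem_compl_iff, mem_image]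
      constructor
      · intro hz
        obtain ⟨t, ht, rfl⟩ := expSurj z
        rcases eq_or_ne t 0 with rfl | ht0
        · exact ⟨2*π, ⟨le_of_lt hθlt, le_refl _⟩, by simp [Circle.exp_two_pi]⟩
        · have ht' : θ ≤ t := by
            by_contra hlt
            exact hz ⟨t, ⟨lt_of_le_of_ne ht.1 (Ne.symm ht0), lt_of_not_ge hlt⟩, rfl⟩
          exact ⟨t, ⟨ht', le_of_lt ht.2⟩, rfl⟩
      · rintro ⟨t, ht, rfl⟩ ⟨s, hs, hst⟩
        have ht2 : Circle.exp t = Circle.exp (if t = 2*π then 0 else t) := by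
          split_ifs with h
          · simp [h, Circle.exp_two_pi]
          · rfl
        have hmem : (if t = 2*π then 0 else t) ∈ Ico 0 (2*π) := by
          split_ifs with h
          · exact ⟨le_refl 0, hπ⟩
          · exact ⟨le_trans (le_of_lt hθpos) ht.1, lt_of_le_of_ne ht.2 h⟩
        have := expInjOn ⟨le_of_lt hs.1, lt_trans hs.2 hθlt⟩ hmem (hst.trans ht2)
        split_ifs at this with h
        · linarith [hs.1]
        · rw [this] at hs; linarith [hs.2, ht.1]
    rw [← compl_compl (Circle.exp '' Ioo 0 θ), isOpen_compl_iff, hcompl]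
    exact (isCompact_Icc.image Circle.exp.continuous).isClosed
  · have hcompl : (Circle.exp '' Ioo θ (2*π))ᶜ = Circle.exp '' Icc 0 θ := by
      ext z
      simp only [mem_compl_iff, mem_image]
      constructor
      · intro hz
        obtain ⟨t, ht, rfl⟩ := expSurj z
        have ht' : t ≤ θ := by
          by_contra hlt
          exact hz ⟨t, ⟨lt_of_not_ge hlt, ht.2⟩, rfl⟩
        exact ⟨t, ⟨ht.1, ht'⟩, rfl⟩
      · rintro ⟨t, ht, rfl⟩ ⟨s, hs, hst⟩
        have hsmem : s ∈ Ico 0 (2*π) := ⟨le_trans (le_of_lt hθpos) (le_of_lt hs.1), hs.2⟩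
        have htmem : t ∈ Ico 0 (2*π) := ⟨ht.1, lt_of_le_of_lt ht.2 hθlt⟩
        have := expInjOn hsmem htmem hst
        rw [this] at hs; linarith [hs.1, ht.2]
    rw [← compl_compl (Circle.exp '' Ioo θ (2*π)), isOpen_compl_iff, hcompl]
    exact (isCompact_Icc.image Circle.exp.continuous).isClosed
  · exact (isPreconnected_Ioo).image _ Circle.exp.continuous.continuousOn
  · exact (isPreconnected_Ioo).image _ Circle.exp.continuous.continuousOn
  · rw [Set.disjoint_left]
    rintro z ⟨s, hs, rfl⟩ ⟨t, ht, hst⟩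
    have hsmem : s ∈ Ico 0 (2*π) := ⟨le_of_lt hs.1, lt_trans hs.2 hθlt⟩
    have htmem : t ∈ Ico 0 (2*π) := ⟨le_trans (le_of_lt hθpos) (le_of_lt ht.1), ht.2⟩
    have := expInjOn htmem hsmem hst
    rw [← this] at hs; linarith [hs.2, ht.1]
  · ext z
    simp only [mem_union, mem_image, mem_compl_iff, mem_insert_iff, mem_singleton_iff]
    constructor
    · rintro (⟨t, ht, rfl⟩ | ⟨t, ht, rfl⟩) <;> push_neg <;> constructor
      · intro h1
        have : Circle.exp t = Circle.exp 0 := by simpa using h1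
        have := expInjOn ⟨le_of_lt ht.1, lt_trans ht.2 hθlt⟩ ⟨le_refl 0, hπ⟩ this
        linarith [ht.1]
      · intro h1
        rw [← hθ] at h1
        have := expInjOn ⟨le_of_lt ht.1, lt_trans ht.2 hθlt⟩ hθmem h1
        linarith [ht.2]
      · intro h1
        have : Circle.exp t = Circle.exp 0 := by simpa using h1
        have := expInjOn ⟨le_trans (le_of_lt hθpos) (le_of_lt ht.1), ht.2⟩ ⟨le_refl 0, hπ⟩ this
        linarith [ht.1, hθpos]
      · intro h1
        rw [← hθ] at h1
        have := expInjOn ⟨le_trans (le_of_lt hθpos) (le_of_lt ht.1), ht.2⟩ hθmem h1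
        linarith [ht.1]
    · intro hz
      push_neg at hz
      obtain ⟨t, ht, rfl⟩ := expSurj z
      have ht0 : t ≠ 0 := by rintro rfl; exact hz.1 (by simp)
      have htθ : t ≠ θ := by rintro rfl; exact hz.2 hθ
      rcases lt_or_gt_of_ne htθ with h | h
      · exact Or.inl ⟨t, ⟨lt_of_le_of_ne ht.1 (Ne.symm ht0), h⟩, rfl⟩
      · exact Or.inr ⟨t, ⟨h, ht.2⟩, rfl⟩
  · have : (1:Circle) ∈ Circle.exp '' closure (Ioo 0 θ) := by
      rw [closure_Ioo hθ0.symm]; exact ⟨0, ⟨le_refl _, le_of_lt hθpos⟩, Circle.exp_zero⟩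
    exact (image_closure_subset_closure_image Circle.exp.continuous) this
  · have : c ∈ Circle.exp '' closure (Ioo 0 θ) := by
      rw [closure_Ioo hθ0.symm]; exact ⟨θ, ⟨le_of_lt hθpos, le_refl _⟩, hθ⟩
    exact (image_closure_subset_closure_image Circle.exp.continuous) this
  · have : (1:Circle) ∈ Circle.exp '' closure (Ioo θ (2*π)) := by
      rw [closure_Ioo (ne_of_lt hθlt)]
      exact ⟨2*π, ⟨le_of_lt hθlt, le_refl _⟩, Circle.exp_two_pi⟩
    exact (image_closure_subset_closure_image Circle.exp.continuous) this
  · have : c ∈ Circle.exp '' closure (Ioo θ (2*π)) := by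
      rw [closure_Ioo (ne_of_lt hθlt)]
      exact ⟨θ, ⟨le_refl _, le_of_lt hθlt⟩, hθ⟩
    exact (image_closure_subset_closure_image Circle.exp.continuous) this

lemma arcSplit' (a b : Circle) (hab : a ≠ b) :
    ∃ C₁ C₂ : Set Circle, IsOpen C₁ ∧ IsOpen C₂ ∧ IsPreconnected C₁ ∧ IsPreconnected C₂ ∧
      Disjoint C₁ C₂ ∧ C₁ ∪ C₂ = ({a, b} : Set Circle)ᶜ ∧
      a ∈ closure C₁ ∧ b ∈ closure C₁ ∧ a ∈ closure C₂ ∧ b ∈ closure C₂ := by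
  have hc : a⁻¹ * b ≠ 1 := fun h => hab (inv_mul_eq_one.mp h).symm.symm
  obtain ⟨C₁, C₂, h1, h2, h3, h4, h5, h6, h7, h8, h9, h10⟩ := arcSplit (a⁻¹ * b) hc
  set e := Homeomorph.mulLeft a with he
  have hea : ∀ z, e z = a * z := fun z => rfl
  refine ⟨e '' C₁, e '' C₂, e.isOpen_image.mpr h1, e.isOpen_image.mpr h2,
    h3.image _ e.continuous.continuousOn, h4.image _ e.continuous.continuousOn,
    (disjoint_image_of_injective e.injective h5 : _), ?_, ?_, ?_, ?_, ?_⟩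
  · rw [← image_union, h6, Set.image_compl_eq e.bijective]
    congr 1
    rw [image_insert_eq, image_singleton, hea, hea, mul_one, mul_inv_cancel_left]
  · rw [← e.image_closure]
    exact ⟨1, h7, by rw [hea, mul_one]⟩
  · rw [← e.image_closure]
    exact ⟨a⁻¹ * b, h8, by rw [hea, mul_inv_cancel_left]⟩
  · rw [← e.image_closure]
    exact ⟨1, h9, by rw [hea, mul_one]⟩
  · rw [← e.image_closure]
    exact ⟨a⁻¹ * b, h10, by rw [hea, mul_inv_cancel_left]⟩

/-- If the circle `S¹` is the union of two open, path-connected, proper subsets `U` and `V`,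
then `U ∩ V` is not path connected: it has at least two path components, i.e. there are two
points of `U ∩ V` which cannot be joined by a path in `U ∩ V`. -/
theorem circle_cover_inter_not_pathConnected (U V : Set Circle)
    (hUopen : IsOpen U) (hVopen : IsOpen V) (hUV : U ∪ V = Set.univ)
    (hUpc : IsPathConnected U) (hVpc : IsPathConnected V)
    (hUproper : U ≠ Set.univ) (hVproper : V ≠ Set.univ) :
    ¬ IsPathConnected (U ∩ V) ∧
      ∃ x ∈ U ∩ V, ∃ y ∈ U ∩ V, ¬ JoinedIn (U ∩ V) x y := by
  obtain ⟨a, ha⟩ : ∃ a, a ∉ U := by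
    by_contra h; push_neg at h; exact hUproper (eq_univ_of_forall h)
  obtain ⟨b, hb⟩ : ∃ b, b ∉ V := by
    by_contra h; push_neg at h; exact hVproper (eq_univ_of_forall h)
  have haV : a ∈ V := by
    have : a ∈ U ∪ V := hUV.symm ▸ mem_univ a
    exact this.resolve_left ha
  have hbU : b ∈ U := by
    have : b ∈ U ∪ V := hUV.symm ▸ mem_univ b
    exact this.resolve_right hb
  have hab : a ≠ b := fun h => hb (h ▸ haV)
  obtain ⟨C₁, C₂, hC1o, hC2o, hC1p, hC2p, hdisj, hunion, haC1, hbC1, haC2, hbC2⟩ :=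
    arcSplit' a b hab
  have meets : ∀ C : Set Circle, IsPreconnected C → a ∈ closure C → b ∈ closure C →
      (C ∩ (U ∩ V)).Nonempty := by
    intro C hCp haC hbC
    have hCU : (C ∩ U).Nonempty := by
      obtain ⟨z, hz⟩ := mem_closure_iff.mp hbC U hUopen hbU
      exact ⟨z, hz.2, hz.1⟩
    have hCV : (C ∩ V).Nonempty := by
      obtain ⟨z, hz⟩ := mem_closure_iff.mp haC V hVopen haV
      exact ⟨z, hz.2, hz.1⟩
    exact hCp U V hUopen hVopen (by rw [hUV]; exact subset_univ C) hCU hCV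
  obtain ⟨x, hxC1, hxUV⟩ := meets C₁ hC1p haC1 hbC1
  obtain ⟨y, hyC2, hyUV⟩ := meets C₂ hC2p haC2 hbC2
  have hUVsub : U ∩ V ⊆ C₁ ∪ C₂ := by
    rw [hunion]
    intro z hz
    simp only [mem_compl_iff, mem_insert_iff, mem_singleton_iff]
    push_neg
    exact ⟨fun h => ha (h ▸ hz.1), fun h => hb (h ▸ hz.2)⟩
  have hnj : ¬ JoinedIn (U ∩ V) x y := by
    rintro ⟨γ, hγ⟩
    have hrange : range γ ⊆ C₁ ∪ C₂ := by
      rintro _ ⟨t, rfl⟩; exact hUVsub (hγ t)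
    have hconn : IsPreconnected (range γ) := isPreconnected_range γ.continuous
    obtain ⟨z, _, hz1, hz2⟩ := hconn C₁ C₂ hC1o hC2o hrange
      ⟨x, ⟨0, γ.source⟩, hxC1⟩ ⟨y, ⟨1, γ.target⟩, hyC2⟩
    exact (Set.disjoint_left.mp hdisj hz1) hz2
  exact ⟨fun h => hnj (h.joinedIn x hxUV y hyUV), x, hxUV, y, hyUV, hnj⟩
end

section
/- (Interchange law for the two compositions of filled squares) Let μ : M → P be a crossed module. Let m, n, u, w ∈ M and b, e, r, s ∈ P satisfy μ(w) = s⁻¹e⁻¹br. Then ((s⁻¹ • u) · w) · (r⁻¹ • ((b⁻¹ • n) · m)) = (s⁻¹ • (u · (e⁻¹ • n))) · (w · (r⁻¹ • m)). (This is the identity expressing that composing a 2×2 grid of filled squares horizontally first and then vertically agrees with composing vertically first and then horizontally; its proof uses axiom CM2.) -/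
/-- **Interchange law for the two compositions of filled squares.**
Let `μ : M → P` be a crossed module (here: groups `M`, `P`, a left action of `P` on `M`
by group automorphisms, and a morphism `μ` satisfying CM1 and CM2).  If
`μ w = s⁻¹ e⁻¹ b r`, then
`((s⁻¹ • u) * w) * (r⁻¹ • ((b⁻¹ • n) * m)) = (s⁻¹ • (u * (e⁻¹ • n))) * (w * (r⁻¹ • m))`. -/
theorem filled_squares_interchange {M P : Type*} [Group M] [Group P]
    [MulDistribMulAction P M] (μ : M →* P)
    (CM1 : ∀ (p : P) (m : M), μ (p • m) = p * μ m * p⁻¹)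
    (CM2 : ∀ m n : M, μ m • n = m * n * m⁻¹)
    (m n u w : M) (b e r s : P) (hw : μ w = s⁻¹ * e⁻¹ * b * r) :
    ((s⁻¹ • u) * w) * (r⁻¹ • ((b⁻¹ • n) * m)) =
      (s⁻¹ • (u * (e⁻¹ • n))) * (w * (r⁻¹ • m)) := by
  have key : w * ((r⁻¹ * b⁻¹) • n) = ((s⁻¹ * e⁻¹) • n) * w := by
    have h := CM2 w ((r⁻¹ * b⁻¹) • n)
    rw [hw, smul_smul] at h
    have : (s⁻¹ * e⁻¹ * b * r) * (r⁻¹ * b⁻¹) = s⁻¹ * e⁻¹ := by group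
    rw [this] at h
    calc w * ((r⁻¹ * b⁻¹) • n)
        = (w * ((r⁻¹ * b⁻¹) • n) * w⁻¹) * w := by group
      _ = ((s⁻¹ * e⁻¹) • n) * w := by rw [← h]
  calc ((s⁻¹ • u) * w) * (r⁻¹ • ((b⁻¹ • n) * m))
      = (s⁻¹ • u) * (w * ((r⁻¹ * b⁻¹) • n)) * (r⁻¹ • m) := by
        rw [smul_mul', smul_smul]; group
    _ = (s⁻¹ • u) * (((s⁻¹ * e⁻¹) • n) * w) * (r⁻¹ • m) := by rw [key]
    _ = (s⁻¹ • (u * (e⁻¹ • n))) * (w * (r⁻¹ • m)) := by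
        rw [smul_mul', smul_smul]; group
end
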